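/- Let c > 1, let n ≥ 2, and let G be a simple graph on n vertices with at least n²/c edges. Then there exists a set S of vertices of G with the following three properties: (1) |S| ≥ n/(40c); (2) the conductance of the induced subgraph G[S] satisfies Φ_{G[S]} ≥ 1/(100·c·log₂ n); and (3) every vertex of S has degree at least n/(10000c) within G[S]. -/

import Mathlib

open Finset

section basic
variable {n : ℕ} (G : SimpleGraph (Fin n)) [DecidableRel G.Adj]

private def dg (S : Finset (Fin n)) (i : Fin n) : ℕ := (S.filter (G.Adj i)).card
private def vol (S : Finset (Fin n)) : ℕ := ∑ i ∈ S, dg G S i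
private def cutE (T C : Finset (Fin n)) : ℕ := ((T ×ˢ C).filter fun p => G.Adj p.1 p.2).card

private lemma sum_dg_cut (T C : Finset (Fin n)) :
    ∑ i ∈ T, (C.filter (G.Adj i)).card = cutE G T C := by
  classical
  rw [cutE, Finset.card_eq_sum_card_fiberwise (f := Prod.fst) (t := T)
    (fun x hx => by simp only [mem_coe, mem_filter, mem_product] at hx; exact hx.1.1)]
  refine Finset.sum_congr rfl fun i hi => ?_
  have hinj : Function.Injective (fun b => (i, b) : Fin n → Fin n × Fin n) := by
    intro a b h; simpa using h
  rw [← Finset.card_image_of_injective (C.filter (G.Adj i)) hinj]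
  congr 1
  ext p
  simp only [mem_filter, mem_product, mem_image]
  aesop

private lemma cutE_symm (T C : Finset (Fin n)) : cutE G T C = cutE G C T := by
  classical
  unfold cutE
  apply Finset.card_nbij (fun p => (p.2, p.1))
  · intro p hp
    simp only [mem_coe, mem_filter, mem_product] at *
    exact ⟨⟨hp.1.2, hp.1.1⟩, hp.2.symm⟩
  · intro p hp q hq h
    simp only [Prod.ext_iff] at *
    exact ⟨h.2, h.1⟩
  · intro p hp
    simp only [Set.mem_image, mem_coe, mem_filter, mem_product] at *
    exact ⟨(p.2, p.1), ⟨⟨hp.1.2, hp.1.1⟩, hp.2.symm⟩, rfl⟩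

private lemma dg_split {S T : Finset (Fin n)} (hT : T ⊆ S) (i : Fin n) :
    dg G S i = dg G T i + dg G (S \ T) i := by
  classical
  unfold dg
  rw [← Finset.card_union_of_disjoint, ← Finset.filter_union, Finset.union_sdiff_of_subset hT]
  exact Finset.disjoint_filter_filter (Finset.disjoint_sdiff)

private lemma vol_split {S T : Finset (Fin n)} (hT : T ⊆ S) :
    vol G S = (∑ i ∈ T, dg G S i) + (∑ i ∈ S \ T, dg G S i) := by
  rw [vol, ← Finset.sum_union Finset.disjoint_sdiff, Finset.union_sdiff_of_subset hT]

private lemma sum_dg_eq {S T : Finset (Fin n)} (hT : T ⊆ S) :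
    ∑ i ∈ T, dg G S i = vol G T + cutE G T (S \ T) := by
  rw [← sum_dg_cut]
  rw [vol, ← Finset.sum_add_distrib]
  exact Finset.sum_congr rfl fun i _ => dg_split G hT i

private lemma sum_dg_eq' {S T : Finset (Fin n)} (hT : T ⊆ S) :
    ∑ i ∈ S \ T, dg G S i = vol G (S \ T) + cutE G T (S \ T) := by
  have := sum_dg_eq G (Finset.sdiff_subset (s := S) (t := T))
  rw [Finset.sdiff_sdiff_eq_self hT] at this
  rwa [cutE_symm G T (S \ T)]

private lemma dg_le (S : Finset (Fin n)) (i : Fin n) : dg G S i ≤ S.card :=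
  Finset.card_filter_le _ _

private lemma vol_le (S : Finset (Fin n)) : vol G S ≤ S.card * S.card := by
  calc vol G S ≤ ∑ _i ∈ S, S.card := Finset.sum_le_sum fun i _ => dg_le G S i
  _ = S.card * S.card := by rw [Finset.sum_const, smul_eq_mul]

private lemma vol_singleton (i : Fin n) : vol G {i} = 0 := by
  simp [vol, dg, Finset.filter_singleton, G.irrefl]

private lemma cutE_le_dg (S : Finset (Fin n)) (i : Fin n) :
    cutE G {i} (S \ {i}) ≤ dg G S i := by
  rw [← sum_dg_cut, Finset.sum_singleton]
  exact Finset.card_le_card (Finset.filter_subset_filter _ Finset.sdiff_subset)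

end basic

section analysis
open Real

private noncomputable def pφ (n : ℕ) (c : ℝ) : ℝ := 1 / (100 * c * Real.logb 2 n)
private noncomputable def pκ (n : ℕ) (c : ℝ) : ℝ := 10 * pφ n c

private lemma hL {n : ℕ} (hn : 2 ≤ n) : 1 ≤ Real.logb 2 n := by
  rw [show (1:ℝ) = Real.logb 2 2 from (Real.logb_self_eq_one one_lt_two).symm]
  exact Real.logb_le_logb_of_le one_lt_two (by norm_num) (by exact_mod_cast hn)

private lemma hφpos {n : ℕ} {c : ℝ} (hn : 2 ≤ n) (hc : 1 < c) : 0 < pφ n c := by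
  have := hL hn
  unfold pφ
  positivity

private lemma hκpos {n : ℕ} {c : ℝ} (hn : 2 ≤ n) (hc : 1 < c) : 0 < pκ n c := by
  have := hφpos hn hc; unfold pκ; linarith

private lemma hφle {n : ℕ} {c : ℝ} (hn : 2 ≤ n) (hc : 1 < c) : pφ n c ≤ 1 / 100 := by
  have h1 := hL hn
  unfold pφ
  rw [div_le_div_iff₀ (by nlinarith) (by norm_num)]
  nlinarith

private lemma exp_neg_le {y : ℝ} (hy : 0 ≤ y) : Real.exp (-y) ≤ 1 / (1 + y) := by
  rw [Real.exp_neg, inv_eq_one_div]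
  rw [div_le_div_iff₀ (Real.exp_pos y) (by linarith)]
  have := Real.add_one_le_exp y
  nlinarith

private lemma hκlog {n : ℕ} {c : ℝ} (hn : 2 ≤ n) (hc : 1 < c) :
    pκ n c * Real.log n = Real.log 2 / (10 * c) := by
  have h2 : Real.log 2 ≠ 0 := ne_of_gt (Real.log_pos one_lt_two)
  have hnl : (0:ℝ) < Real.log n := by
    apply Real.log_pos
    exact_mod_cast Nat.lt_of_lt_of_le one_lt_two hn
  have hc0 : c ≠ 0 := by linarith
  unfold pκ pφ Real.logb
  field_simp
  ring

private lemma hκlog_le {n : ℕ} {c : ℝ} (hn : 2 ≤ n) (hc : 1 < c) :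
    pκ n c * Real.log n ≤ 7 / 100 := by
  rw [hκlog hn hc]
  have := Real.log_two_lt_d9
  rw [div_le_div_iff₀ (by linarith) (by norm_num)]
  nlinarith

private lemma E1 {n s : ℕ} {c : ℝ} (hn : 2 ≤ n) (hc : 1 < c) (hs1 : 1 ≤ s) (hsn : s ≤ n) :
    (93/100 : ℝ) ≤ ((s:ℝ)/n) ^ pκ n c := by
  have hn0 : (0:ℝ) < n := by exact_mod_cast Nat.lt_of_lt_of_le Nat.zero_lt_two hn
  have hs0 : (0:ℝ) < s := by exact_mod_cast hs1
  have hκ0 : 0 ≤ pκ n c := (hκpos hn hc).le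
  have hbase : (1:ℝ)/n ≤ (s:ℝ)/n := by gcongr; exact_mod_cast hs1
  have h1 : ((1:ℝ)/n) ^ pκ n c ≤ ((s:ℝ)/n) ^ pκ n c :=
    Real.rpow_le_rpow (by positivity) hbase hκ0
  refine le_trans ?_ h1
  rw [Real.rpow_def_of_pos (by positivity), one_div, Real.log_inv]
  have heq : Real.log ↑n * -1 * pκ n c = -(pκ n c * Real.log n) := by ring
  rw [show -Real.log ↑n * pκ n c = -(pκ n c * Real.log ↑n) by ring]
  have h2 := Real.add_one_le_exp (-(pκ n c * Real.log ↑n))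
  have h3 := hκlog_le hn hc
  linarith

private lemma E2 {n : ℕ} {c : ℝ} (hn : 2 ≤ n) (hc : 1 < c) {x : ℝ} (hx0 : 0 ≤ x)
    (hx : x ≤ 1/2) : x ^ pκ n c ≤ 1 - 2 * pφ n c := by
  have hφ1 := hφpos hn hc
  have hφ2 := hφle hn hc
  have hκ0 : 0 ≤ pκ n c := (hκpos hn hc).le
  have hl2 := Real.log_two_gt_d9
  have hl2' := Real.log_two_lt_d9
  have h1 : x ^ pκ n c ≤ ((1:ℝ)/2) ^ pκ n c := Real.rpow_le_rpow hx0 hx hκ0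
  have h2 : ((1:ℝ)/2) ^ pκ n c = Real.exp (-(pκ n c * Real.log 2)) := by
    rw [Real.rpow_def_of_pos (by norm_num), one_div, Real.log_inv]
    ring_nf
  have hy : 0 ≤ pκ n c * Real.log 2 := by positivity
  have h3 := exp_neg_le hy
  -- 1/(1+y) ≤ 1 - 2φ with y = 10 φ log 2
  have h4 : 1 / (1 + pκ n c * Real.log 2) ≤ 1 - 2 * pφ n c := by
    rw [div_le_iff₀ (by linarith)]
    unfold pκ
    have hlp : (0:ℝ) < Real.log 2 := by linarith
    have h20 : 20 * pφ n c * Real.log 2 ≤ (2/10) * Real.log 2 := by nlinarith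
    have inner : (0:ℝ) ≤ 10 * Real.log 2 - 2 - 20 * pφ n c * Real.log 2 := by nlinarith
    have key := mul_nonneg hφ1.le inner
    nlinarith [key]
  calc x ^ pκ n c ≤ ((1:ℝ)/2) ^ pκ n c := h1
    _ = Real.exp (-(pκ n c * Real.log 2)) := h2
    _ ≤ 1 / (1 + pκ n c * Real.log 2) := h3
    _ ≤ 1 - 2 * pφ n c := h4

private lemma E3 {n : ℕ} {c : ℝ} (hn : 2 ≤ n) (hc : 1 < c) {x : ℝ} (hx0 : 0 ≤ x)
    (hx : x ≤ 1/2) : (1 - x) ^ pκ n c ≤ 1 - 2 * pφ n c * x := by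
  have hφ1 := hφpos hn hc
  have hφ2 := hφle hn hc
  have hκ0 : 0 ≤ pκ n c := (hκpos hn hc).le
  have h1x : (0:ℝ) < 1 - x := by linarith
  have h1 : (1 - x) ^ pκ n c = Real.exp (Real.log (1 - x) * pκ n c) :=
    Real.rpow_def_of_pos h1x _
  have h2 : Real.log (1 - x) ≤ -x := by
    have := Real.log_le_sub_one_of_pos h1x
    linarith
  have h3 : Real.log (1 - x) * pκ n c ≤ -(pκ n c * x) := by
    rw [show -(pκ n c * x) = (-x) * pκ n c by ring]
    exact mul_le_mul_of_nonneg_right h2 hκ0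
  have h4 : Real.exp (Real.log (1 - x) * pκ n c) ≤ Real.exp (-(pκ n c * x)) :=
    Real.exp_le_exp.mpr h3
  have hy : 0 ≤ pκ n c * x := by positivity
  have h5 := exp_neg_le hy
  have h6 : 1 / (1 + pκ n c * x) ≤ 1 - 2 * pφ n c * x := by
    rw [div_le_iff₀ (by linarith)]
    unfold pκ
    have hφx : pφ n c * x ≤ 1/200 := by nlinarith [mul_le_mul hφ2 hx hx0 (by norm_num : (0:ℝ) ≤ 1/100)]
    have key := mul_nonneg (mul_nonneg hφ1.le hx0) (by linarith : (0:ℝ) ≤ 8 - 20 * (pφ n c * x))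
    nlinarith [key]
  linarith [h1 ▸ le_trans h4 (le_trans h5 h6)]

end analysis

section main
open Real

variable {n : ℕ} {c : ℝ} (G : SimpleGraph (Fin n)) [DecidableRel G.Adj]

/-- the density invariant -/
private def Qp (n : ℕ) (c : ℝ) (G : SimpleGraph (Fin n)) [DecidableRel G.Adj]
    (S : Finset (Fin n)) : Prop :=
  (n / (2*c)) * S.card * ((S.card : ℝ)/n) ^ pκ n c ≤ (vol G S : ℝ)

private lemma arith_g4 {vT cut φ : ℝ} (hvT : 0 ≤ vT) (hφ1 : 0 < φ) (hφ2 : φ ≤ 1/100)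
    (w2 : cut ≤ φ * vT) : vT * (1 - 2*φ) ≤ vT - cut := by nlinarith

private lemma arith_u2 {v φ s t : ℝ} (hv : 0 ≤ v) (hφ : 0 ≤ φ) (ht : 0 ≤ t) (h2t : 2*t ≤ s) :
    v * ((s-t) * (s - 2*φ*t)) ≤ v * (s * (s - (1+φ)*t)) := by
  nlinarith [mul_nonneg (mul_nonneg hv (mul_nonneg hφ ht)) (by linarith : (0:ℝ) ≤ s - 2*t)]

private lemma arith_u3 {v vT vC cut φ s t : ℝ} (hv : 0 ≤ v) (hvT : 0 ≤ vT) (hφ : 0 ≤ φ)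
    (hs : 0 < s) (w1 : vT * s ≤ v * t) (w2 : cut ≤ φ * vT) (hsplit : vT + vC = v) :
    v * (s * (s - (1+φ)*t)) ≤ (vC - cut) * (s*s) := by
  nlinarith [mul_le_mul_of_nonneg_left w1 (mul_nonneg (by linarith : (0:ℝ) ≤ 1+φ) hs.le),
    mul_le_mul_of_nonneg_right w2 (mul_pos hs hs).le]

private lemma arith_c2 {v vT vC cut φ s t : ℝ} (hv : 0 ≤ v) (hvT : 0 ≤ vT) (hφ1 : 0 < φ)
    (hφ2 : φ ≤ 1/100) (hs : 0 < s) (hst : 0 < s - t) (h2st : 2*(s-t) ≤ s)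
    (w2 : cut ≤ φ * vT) (w3 : 2 * vT ≤ v) (hsplit : vT + vC = v) :
    v * ((s-t) * (1 - 2*φ)) ≤ (vC - cut) * s := by
  nlinarith [mul_nonneg (mul_nonneg hv (by linarith : (0:ℝ) ≤ 1 - 2*φ)) (by linarith : (0:ℝ) ≤ s - 2*(s-t)),
    mul_nonneg (mul_nonneg hφ1.le (by linarith : (0:ℝ) ≤ v - 2*vT)) hs.le,
    mul_nonneg (mul_nonneg hφ1.le hv) hs.le,
    mul_le_mul_of_nonneg_right w2 hs.le]

set_option maxHeartbeats 1000000 in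
private lemma cut_step (hn : 2 ≤ n) (hc : 1 < c) {S T : Finset (Fin n)}
    (hT : T ⊆ S) (hTne : T.Nonempty) (hCne : (S \ T).Nonempty)
    (hvol : (∑ i ∈ T, dg G S i : ℝ) ≤ (∑ i ∈ S \ T, dg G S i : ℝ))
    (hcut : (cutE G T (S \ T) : ℝ) < pφ n c * (∑ i ∈ T, dg G S i : ℝ))
    (hQ : Qp n c G S) :
    ∃ S'', S'' ⊆ S ∧ S''.Nonempty ∧ Qp n c G S'' ∧ S''.card < S.card := by
  have hφ1 := hφpos hn hc
  have hφ2 := hφle hn hc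
  have hκ0 : 0 ≤ pκ n c := (hκpos hn hc).le
  have hn0 : (0:ℝ) < n := by exact_mod_cast Nat.lt_of_lt_of_le Nat.zero_lt_two hn
  have hc0 : (0:ℝ) < c := by linarith
  set φ := pφ n c with hφdef
  set κ := pκ n c with hκdef
  set s : ℝ := (S.card : ℝ) with hsdef
  set t : ℝ := (T.card : ℝ) with htdef
  set v : ℝ := (vol G S : ℝ) with hvdef
  set vT : ℝ := (∑ i ∈ T, dg G S i : ℝ) with hvTdef
  set vC : ℝ := (∑ i ∈ S \ T, dg G S i : ℝ) with hvCdef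
  set cut : ℝ := (cutE G T (S \ T) : ℝ) with hcutdef
  have hts_nat : T.card < S.card := by
    apply Finset.card_lt_card
    rw [Finset.ssubset_iff_of_subset hT]
    obtain ⟨x, hx⟩ := hCne
    exact ⟨x, (Finset.mem_sdiff.mp hx).1, (Finset.mem_sdiff.mp hx).2⟩
  have hcard_sdiff : ((S \ T).card : ℝ) = s - t := by
    rw [Finset.card_sdiff_of_subset hT]
    push_cast [Nat.cast_sub hts_nat.le]
    ring
  have ht0 : (0:ℝ) < t := by
    rw [htdef]; exact_mod_cast Finset.card_pos.mpr hTne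
  have hs0 : (0:ℝ) < s := by
    rw [hsdef]; exact_mod_cast Finset.card_pos.mpr ⟨hTne.choose, hT hTne.choose_spec⟩
  have hst0 : (0:ℝ) < s - t := by
    have : (0:ℝ) < ((S \ T).card : ℝ) := by exact_mod_cast Finset.card_pos.mpr hCne
    linarith [hcard_sdiff ▸ this]
  have hsplit : vT + vC = v := by
    rw [hvTdef, hvCdef, hvdef]
    exact_mod_cast (vol_split G hT).symm
  have hvTeq : vT = (vol G T : ℝ) + cut := by
    rw [hvTdef, hcutdef]; exact_mod_cast congrArg (fun k : ℕ => (k:ℝ)) (sum_dg_eq G hT)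
  have hvCeq : vC = (vol G (S \ T) : ℝ) + cut := by
    rw [hvCdef, hcutdef]; exact_mod_cast congrArg (fun k : ℕ => (k:ℝ)) (sum_dg_eq' G hT)
  have hcut0 : (0:ℝ) ≤ cut := by positivity
  have hvT0 : (0:ℝ) ≤ vT := by positivity
  have hv0 : (0:ℝ) ≤ v := by positivity
  have hβ0 : (0:ℝ) ≤ n / (2*c) := by positivity
  have hA0 : (0:ℝ) ≤ (s/n) ^ κ := by positivity
  have hPs : (n / (2*c)) * ((s/n) ^ κ) * s ≤ v := by
    have := hQ
    unfold Qp at this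
    rw [← hsdef, ← hvdef, ← hκdef] at this
    rw [show (n:ℝ)/(2*c)*((s/n)^κ)*s = (n:ℝ)/(2*c)*s*((s/n)^κ) from by ring]
    exact this
  have hsplitpow : ∀ u : ℝ, 0 < u → (u/(n:ℝ)) ^ κ = ((s/n) ^ κ) * ((u/s) ^ κ) := by
    intro u hu
    rw [← Real.mul_rpow (by positivity) (by positivity)]
    congr 1
    field_simp
  have hcardTnat : 0 < T.card := Finset.card_pos.mpr hTne
  by_cases hts : 2 * T.card ≤ S.card
  · have hts' : t / s ≤ 1/2 := by
      rw [div_le_iff₀ hs0]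
      have h2t : ((2 * T.card : ℕ) : ℝ) ≤ ((S.card : ℕ) : ℝ) := by exact_mod_cast hts
      push_cast at h2t
      rw [htdef, hsdef]
      linarith
    by_cases hAcase : v * t ≤ vT * s
    · -- keep T
      refine ⟨T, hT, hTne, ?_, hts_nat⟩
      unfold Qp
      rw [← htdef, ← hκdef, hsplitpow t ht0]
      have f1 : (t/s) ^ κ ≤ 1 - 2*φ := E2 hn hc (div_nonneg ht0.le hs0.le) hts'
      have g2 : (n/(2*c)) * ((s/n)^κ) * t ≤ vT := by
        have h1 : (n/(2*c)) * ((s/n)^κ) * t * s ≤ vT * s := by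
          calc (n:ℝ)/(2*c) * ((s/n)^κ) * t * s = ((n/(2*c)) * ((s/n)^κ) * s) * t := by ring
            _ ≤ v * t := mul_le_mul_of_nonneg_right hPs ht0.le
            _ ≤ vT * s := hAcase
        exact le_of_mul_le_mul_right h1 hs0
      have g4 : vT * (1 - 2*φ) ≤ vT - cut := arith_g4 hvT0 hφ1 hφ2 hcut.le
      calc (n:ℝ)/(2*c) * t * ((s/n)^κ * (t/s)^κ)
          = ((n/(2*c)) * ((s/n)^κ) * t) * ((t/s)^κ) := by ring
        _ ≤ ((n/(2*c)) * ((s/n)^κ) * t) * (1 - 2*φ) := by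
            apply mul_le_mul_of_nonneg_left f1 (mul_nonneg (mul_nonneg hβ0 hA0) ht0.le)
        _ ≤ vT * (1 - 2*φ) := by
            apply mul_le_mul_of_nonneg_right g2 (by linarith)
        _ ≤ vT - cut := g4
        _ ≤ (vol G T : ℝ) := by rw [hvTeq]; linarith
    · -- keep C, case B
      push_neg at hAcase
      have hcard : (S \ T).card < S.card := by
        rw [Finset.card_sdiff_of_subset hT]; omega
      refine ⟨S \ T, Finset.sdiff_subset, hCne, ?_, hcard⟩
      unfold Qp
      rw [← hκdef, hcard_sdiff, hsplitpow (s-t) hst0]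
      rw [show ((vol G (S \ T)):ℝ) = vC - cut from by linarith [hvCeq]]
      have hx1 : (s-t)/s = 1 - t/s := by field_simp
      have f2 : ((s-t)/s) ^ κ ≤ 1 - 2*φ*(t/s) := by
        rw [hx1]; exact E3 hn hc (div_nonneg ht0.le hs0.le) hts'
      have hst_le : t ≤ s := by rw [htdef, hsdef]; exact_mod_cast hts_nat.le
      have h2φt : 0 ≤ 1 - 2*φ*(t/s) := by
        have : 2*φ*(t/s) ≤ 2*(1/100)*(1/2) := by
          apply mul_le_mul (by linarith) hts' (div_nonneg ht0.le hs0.le) (by norm_num)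
        linarith
      have step1 : (n:ℝ)/(2*c) * (s-t) * ((s/n)^κ * ((s-t)/s)^κ)
          ≤ ((n/(2*c)) * ((s/n)^κ) * (s-t)) * (1 - 2*φ*(t/s)) := by
        calc (n:ℝ)/(2*c) * (s-t) * ((s/n)^κ * ((s-t)/s)^κ)
            = ((n/(2*c)) * ((s/n)^κ) * (s-t)) * (((s-t)/s)^κ) := by ring
          _ ≤ _ := mul_le_mul_of_nonneg_left f2 (mul_nonneg (mul_nonneg hβ0 hA0) hst0.le)
      have hmulsfact : (1 - 2*φ*(t/s)) * s = s - 2*φ*t := by field_simp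
      have step2 : ((n/(2*c)) * ((s/n)^κ) * (s-t)) * (1 - 2*φ*(t/s)) * (s*s) ≤ (vC - cut) * (s*s) := by
        have expand : ((n/(2*c)) * ((s/n)^κ) * (s-t)) * (1 - 2*φ*(t/s)) * (s*s)
            = ((n/(2*c)) * ((s/n)^κ) * s) * ((s-t) * ((1 - 2*φ*(t/s))*s)) := by ring
        rw [expand, hmulsfact]
        have hfac0 : 0 ≤ (s-t) * (s - 2*φ*t) := by
          apply mul_nonneg hst0.le
          have h1 := mul_le_mul_of_nonneg_right (by linarith : 2*φ ≤ (1:ℝ)) ht0.le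
          linarith
        have u1 : ((n/(2*c)) * ((s/n)^κ) * s) * ((s-t) * (s - 2*φ*t)) ≤ v * ((s-t) * (s - 2*φ*t)) :=
          mul_le_mul_of_nonneg_right hPs hfac0
        have u2 : v * ((s-t) * (s - 2*φ*t)) ≤ v * (s * (s - (1+φ)*t)) := by
          apply arith_u2 hv0 hφ1.le ht0.le
          have h2t : ((2 * T.card : ℕ) : ℝ) ≤ ((S.card : ℕ) : ℝ) := by exact_mod_cast hts
          push_cast at h2t
          rw [htdef, hsdef]
          linarith
        have u3 : v * (s * (s - (1+φ)*t)) ≤ (vC - cut) * (s*s) :=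
          arith_u3 hv0 hvT0 hφ1.le hs0 hAcase.le hcut.le hsplit
        linarith
      have := le_of_mul_le_mul_right step2 (mul_pos hs0 hs0)
      linarith [step1]
  · -- case C : s < 2t, keep C
    push_neg at hts
    have hts2 : 2 * (s - t) ≤ s := by
      have h2t : ((S.card : ℕ) : ℝ) < ((2 * T.card : ℕ) : ℝ) := by exact_mod_cast hts
      push_cast at h2t
      rw [hsdef, htdef]
      linarith
    have hcard : (S \ T).card < S.card := by
      rw [Finset.card_sdiff_of_subset hT]; omega
    refine ⟨S \ T, Finset.sdiff_subset, hCne, ?_, hcard⟩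
    unfold Qp
    rw [← hκdef, hcard_sdiff, hsplitpow (s-t) hst0]
    rw [show ((vol G (S \ T)):ℝ) = vC - cut from by linarith [hvCeq]]
    have hts' : (s-t) / s ≤ 1/2 := by rw [div_le_iff₀ hs0]; linarith
    have f1 : ((s-t)/s) ^ κ ≤ 1 - 2*φ := E2 hn hc (div_nonneg hst0.le hs0.le) hts'
    have step1 : (n:ℝ)/(2*c) * (s-t) * ((s/n)^κ * ((s-t)/s)^κ)
        ≤ ((n/(2*c)) * ((s/n)^κ) * (s-t)) * (1 - 2*φ) := by
      calc (n:ℝ)/(2*c) * (s-t) * ((s/n)^κ * ((s-t)/s)^κ)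
          = ((n/(2*c)) * ((s/n)^κ) * (s-t)) * (((s-t)/s)^κ) := by ring
        _ ≤ _ := mul_le_mul_of_nonneg_left f1 (mul_nonneg (mul_nonneg hβ0 hA0) hst0.le)
    have step2 : ((n/(2*c)) * ((s/n)^κ) * (s-t)) * (1 - 2*φ) * s ≤ (vC - cut) * s := by
      have expand : ((n/(2*c)) * ((s/n)^κ) * (s-t)) * (1 - 2*φ) * s
          = ((n/(2*c)) * ((s/n)^κ) * s) * ((s-t) * (1 - 2*φ)) := by ring
      rw [expand]
      have hfac0 : 0 ≤ (s-t) * (1 - 2*φ) := mul_nonneg hst0.le (by linarith)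
      have u1 : ((n/(2*c)) * ((s/n)^κ) * s) * ((s-t) * (1 - 2*φ)) ≤ v * ((s-t) * (1 - 2*φ)) :=
        mul_le_mul_of_nonneg_right hPs hfac0
      have u2 : v * ((s-t) * (1 - 2*φ)) ≤ (vC - cut) * s :=
        arith_c2 hv0 hvT0 hφ1 hφ2 hs0 hst0 hts2 hcut.le (by linarith [hvol, hsplit]) hsplit
      linarith
    have := le_of_mul_le_mul_right step2 hs0
    linarith [step1]

set_option maxHeartbeats 1000000 in
private lemma trim_step (hn : 2 ≤ n) (hc : 1 < c) {S : Finset (Fin n)} {i : Fin n}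
    (hi : i ∈ S) (hdeg : ((dg G S i : ℕ) : ℝ) < (n:ℝ)/(10000*c)) (hQ : Qp n c G S) :
    Qp n c G (S.erase i) := by
  have hφ1 := hφpos hn hc
  have hκ0 : 0 ≤ pκ n c := (hκpos hn hc).le
  have hn0 : (0:ℝ) < n := by exact_mod_cast Nat.lt_of_lt_of_le Nat.zero_lt_two hn
  have hc0 : (0:ℝ) < c := by linarith
  have hs1 : 1 ≤ S.card := Finset.card_pos.mpr ⟨i, hi⟩
  have hsn : S.card ≤ n := by
    simpa using Finset.card_le_univ S
  -- volume of erase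
  have herase : S.erase i = S \ {i} := by rw [Finset.sdiff_singleton_eq_erase]
  have hsub : {i} ⊆ S := Finset.singleton_subset_iff.mpr hi
  have hv1 : ∑ j ∈ {i}, dg G S j = vol G {i} + cutE G {i} (S \ {i}) := sum_dg_eq G hsub
  have hv2 : ∑ j ∈ S \ {i}, dg G S j = vol G (S \ {i}) + cutE G {i} (S \ {i}) := sum_dg_eq' G hsub
  have hvs : vol G S = (∑ j ∈ {i}, dg G S j) + ∑ j ∈ S \ {i}, dg G S j := vol_split G hsub
  have hsing : ∑ j ∈ {i}, dg G S j = dg G S i := Finset.sum_singleton _ _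
  have hcutle : cutE G {i} (S \ {i}) ≤ dg G S i := cutE_le_dg G S i
  have hvol0 : vol G {i} = 0 := vol_singleton G i
  have hvolerase : (vol G S : ℝ) - 2 * (dg G S i : ℝ) ≤ (vol G (S \ {i}) : ℝ) := by
    have : (vol G S : ℕ) = dg G S i + (vol G (S \ {i}) + cutE G {i} (S \ {i})) := by
      omega
    have hc2 : ((cutE G {i} (S \ {i}) : ℕ) : ℝ) ≤ ((dg G S i : ℕ) : ℝ) := by exact_mod_cast hcutle
    have := congrArg (fun k : ℕ => (k : ℝ)) this
    push_cast at this
    linarith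
  -- Q for the erased set
  unfold Qp at hQ ⊢
  rw [herase]
  have hcard : ((S \ {i}).card : ℝ) = (S.card : ℝ) - 1 := by
    rw [← herase, Finset.card_erase_of_mem hi]
    push_cast [Nat.cast_sub hs1]
    ring
  rw [hcard]
  set κ := pκ n c
  set s : ℝ := (S.card : ℝ) with hsdef
  have hs1' : (1:ℝ) ≤ s := by rw [hsdef]; exact_mod_cast hs1
  have hmono : ((s-1)/n) ^ κ ≤ (s/n) ^ κ := by
    apply Real.rpow_le_rpow (div_nonneg (by linarith) hn0.le) _ hκ0
    gcongr
    linarith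
  have hE1 : (93/100 : ℝ) ≤ (s/n) ^ κ := E1 hn hc hs1 hsn
  have hb1 : (n:ℝ)/(2*c) * (s-1) * ((s-1)/n) ^ κ ≤ (n:ℝ)/(2*c) * (s-1) * ((s/n) ^ κ) := by
    apply mul_le_mul_of_nonneg_left hmono (mul_nonneg (by positivity) (by linarith))
  have hb2 : (n:ℝ)/(2*c) * (s-1) * ((s/n) ^ κ) = (n:ℝ)/(2*c) * s * ((s/n) ^ κ) - (n:ℝ)/(2*c) * ((s/n) ^ κ) := by ring
  have hb3 : (n:ℝ)/(2*c) * (93/100) ≤ (n:ℝ)/(2*c) * ((s/n) ^ κ) :=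
    mul_le_mul_of_nonneg_left hE1 (by positivity)
  have hnc : (0:ℝ) ≤ (n:ℝ)/c := by positivity
  have e1 : 2*((n:ℝ)/(10000*c)) = ((n:ℝ)/c)*(1/5000) := by field_simp; ring
  have e2 : ((n:ℝ)/(2*c))*(93/100) = ((n:ℝ)/c)*(93/200) := by field_simp; ring
  have hd : 2*((n:ℝ)/(10000*c)) ≤ ((n:ℝ)/(2*c))*(93/100) := by
    rw [e1, e2]
    exact mul_le_mul_of_nonneg_left (by norm_num) hnc
  linarith [hQ, hvolerase, hb1, hb3]

private lemma singleton_contra (hn : 2 ≤ n) (hc : 1 < c) {S : Finset (Fin n)}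
    (h1 : S.card = 1) (hQ : Qp n c G S) : False := by
  obtain ⟨a, ha⟩ := Finset.card_eq_one.mp h1
  have hv : vol G S = 0 := by rw [ha]; exact vol_singleton G a
  unfold Qp at hQ
  rw [hv, h1] at hQ
  have hn0 : (0:ℝ) < n := by exact_mod_cast Nat.lt_of_lt_of_le Nat.zero_lt_two hn
  have hc0 : (0:ℝ) < c := by linarith
  have hpos : (0:ℝ) < (n:ℝ)/(2*c) * 1 * (((1:ℕ):ℝ)/n) ^ pκ n c := by
    apply mul_pos (mul_pos (by positivity) one_pos)
    apply Real.rpow_pos_of_pos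
    positivity
  push_cast at hQ hpos
  linarith

private lemma key (hn : 2 ≤ n) (hc : 1 < c) :
    ∀ m : ℕ, ∀ S : Finset (Fin n), S.card ≤ m → S.Nonempty → Qp n c G S →
    ∃ S', S' ⊆ S ∧ S'.Nonempty ∧ Qp n c G S' ∧
      (∀ T ⊆ S', T.Nonempty → T ≠ S' →
        pφ n c * min (∑ i ∈ T, ((S'.filter (G.Adj i)).card : ℝ))
            (∑ i ∈ S' \ T, ((S'.filter (G.Adj i)).card : ℝ))
          ≤ (((T ×ˢ (S' \ T)).filter fun p => G.Adj p.1 p.2).card : ℝ)) ∧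
      (∀ i ∈ S', (n : ℝ) / (10000*c) ≤ ((S'.filter (G.Adj i)).card : ℝ)) := by
  intro m
  induction m with
  | zero =>
    intro S hcard hne _
    exact absurd (Finset.card_pos.mpr hne) (by omega)
  | succ m ih =>
    intro S hcard hne hQ
    by_cases h3 : ∀ i ∈ S, (n : ℝ)/(10000*c) ≤ ((S.filter (G.Adj i)).card : ℝ)
    · by_cases h2 : ∀ T ⊆ S, T.Nonempty → T ≠ S →
          pφ n c * min (∑ i ∈ T, ((S.filter (G.Adj i)).card : ℝ))
              (∑ i ∈ S \ T, ((S.filter (G.Adj i)).card : ℝ))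
            ≤ (((T ×ˢ (S \ T)).filter fun p => G.Adj p.1 p.2).card : ℝ)
      · exact ⟨S, subset_rfl, hne, hQ, h2, h3⟩
      · push_neg at h2
        obtain ⟨T, hTsub, hTne, hTneq, hviol⟩ := h2
        have hCne : (S \ T).Nonempty := by
          rw [Finset.sdiff_nonempty]
          intro hST
          exact hTneq (Finset.Subset.antisymm hTsub hST)
        have hviol' : (cutE G T (S \ T) : ℝ) <
            pφ n c * min (∑ i ∈ T, ((dg G S i : ℕ) : ℝ)) (∑ i ∈ S \ T, ((dg G S i : ℕ) : ℝ)) := by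
          exact hviol
        have hstep : ∃ S'', S'' ⊆ S ∧ S''.Nonempty ∧ Qp n c G S'' ∧ S''.card < S.card := by
          rcases le_total (∑ i ∈ T, ((dg G S i : ℕ) : ℝ)) (∑ i ∈ S \ T, ((dg G S i : ℕ) : ℝ)) with hle | hle
          · refine cut_step G hn hc hTsub hTne hCne hle ?_ hQ
            calc (cutE G T (S \ T) : ℝ) < _ := hviol'
              _ ≤ pφ n c * (∑ i ∈ T, ((dg G S i : ℕ) : ℝ)) := by
                  apply mul_le_mul_of_nonneg_left (min_le_left _ _) (hφpos hn hc).le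
          · have hST : S \ (S \ T) = T := Finset.sdiff_sdiff_eq_self hTsub
            refine cut_step G hn hc Finset.sdiff_subset hCne (by rw [hST]; exact hTne)
              (by rw [hST]; exact hle) ?_ hQ
            rw [hST, cutE_symm G (S \ T) T]
            calc (cutE G T (S \ T) : ℝ) < _ := hviol'
              _ ≤ pφ n c * (∑ i ∈ S \ T, ((dg G S i : ℕ) : ℝ)) := by
                  apply mul_le_mul_of_nonneg_left (min_le_right _ _) (hφpos hn hc).le
        obtain ⟨S'', hsub'', hne'', hQ'', hlt''⟩ := hstep
        obtain ⟨S', h1, h2, h3', h4, h5⟩ := ih S'' (by omega) hne'' hQ''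
        exact ⟨S', h1.trans hsub'', h2, h3', h4, h5⟩
    · push_neg at h3
      obtain ⟨i, hi, hdeg⟩ := h3
      have h2le : 2 ≤ S.card := by
        rcases Nat.lt_or_ge S.card 2 with h | h
        · interval_cases hS : S.card
          · exact absurd (Finset.card_pos.mpr hne) (by omega)
          · exact absurd (singleton_contra G hn hc hS hQ) (by simp)
        · exact h
      have hQ'' : Qp n c G (S.erase i) := trim_step G hn hc hi hdeg hQ
      have hne'' : (S.erase i).Nonempty := by
        rw [← Finset.card_pos, Finset.card_erase_of_mem hi]
        omega
      obtain ⟨S', h1, h2, h3', h4, h5⟩ := ih (S.erase i)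
        (by rw [Finset.card_erase_of_mem hi]; omega) hne'' hQ''
      exact ⟨S', h1.trans (Finset.erase_subset i S), h2, h3', h4, h5⟩

end main

theorem stmt_6 (n : ℕ) (hn : 2 ≤ n) (c : ℝ) (hc : 1 < c)
    (G : SimpleGraph (Fin n)) [DecidableRel G.Adj]
    (hdense : (n : ℝ) ^ 2 / c ≤ (G.edgeFinset.card : ℝ)) :
    ∃ S : Finset (Fin n),
      ((n : ℝ) / (40 * c) ≤ (S.card : ℝ)) ∧
      (∀ T ⊆ S, T.Nonempty → T ≠ S →
        (1 / (100 * c * Real.logb 2 n)) *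
          min (∑ i ∈ T, ((S.filter (G.Adj i)).card : ℝ))
              (∑ i ∈ S \ T, ((S.filter (G.Adj i)).card : ℝ))
          ≤ (((T ×ˢ (S \ T)).filter fun p => G.Adj p.1 p.2).card : ℝ)) ∧
      (∀ i ∈ S, (n : ℝ) / (10000 * c) ≤ ((S.filter (G.Adj i)).card : ℝ)) := by
  have hn0 : (0:ℝ) < n := by exact_mod_cast Nat.lt_of_lt_of_le Nat.zero_lt_two hn
  have hc0 : (0:ℝ) < c := by linarith
  have hκ0 : 0 ≤ pκ n c := (hκpos hn hc).le
  -- Qp for univ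
  have hvol_univ : (vol G Finset.univ : ℝ) = 2 * (G.edgeFinset.card : ℝ) := by
    have h1 : ∑ v, G.degree v = 2 * G.edgeFinset.card := G.sum_degrees_eq_twice_card_edges
    have h2 : vol G Finset.univ = ∑ v, G.degree v := by
      apply Finset.sum_congr rfl
      intro v _
      rw [SimpleGraph.degree, SimpleGraph.neighborFinset_eq_filter]
      rfl
    rw [h2]
    exact_mod_cast h1
  have hQuniv : Qp n c G Finset.univ := by
    unfold Qp
    have hcard : ((Finset.univ : Finset (Fin n)).card : ℝ) = (n:ℝ) := by
      simp
    rw [hcard, hvol_univ]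
    rw [div_self (ne_of_gt hn0), Real.one_rpow]
    have : (n:ℝ)^2/c ≤ (G.edgeFinset.card : ℝ) := hdense
    have hexp : (n:ℝ)/(2*c) * (n:ℝ) * 1 = ((n:ℝ)^2/c)/2 := by field_simp
    rw [hexp]
    linarith
  have huniv_ne : (Finset.univ : Finset (Fin n)).Nonempty :=
    ⟨⟨0, by omega⟩, Finset.mem_univ _⟩
  obtain ⟨S', hsub, hne, hQ', h4, h5⟩ :=
    key G hn hc n Finset.univ (by simp) huniv_ne hQuniv
  refine ⟨S', ?_, h4, h5⟩
  -- size bound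
  have hs1 : 1 ≤ S'.card := Finset.card_pos.mpr hne
  have hsn : S'.card ≤ n := by simpa using Finset.card_le_univ S'
  have hE1 : (93/100 : ℝ) ≤ ((S'.card : ℝ)/n) ^ pκ n c := E1 hn hc hs1 hsn
  have hvle : (vol G S' : ℝ) ≤ (S'.card : ℝ) * (S'.card : ℝ) := by exact_mod_cast vol_le G S'
  have hs0 : (0:ℝ) < (S'.card : ℝ) := by exact_mod_cast hs1
  unfold Qp at hQ'
  have hchain : (n:ℝ)/(2*c) * (93/100) * (S'.card : ℝ) ≤ (S'.card : ℝ) * (S'.card : ℝ) := by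
    calc (n:ℝ)/(2*c) * (93/100) * (S'.card : ℝ)
        ≤ (n:ℝ)/(2*c) * (((S'.card : ℝ)/n) ^ pκ n c) * (S'.card : ℝ) := by
          apply mul_le_mul_of_nonneg_right
            (mul_le_mul_of_nonneg_left hE1 (by positivity)) hs0.le
      _ = (n:ℝ)/(2*c) * (S'.card : ℝ) * (((S'.card : ℝ)/n) ^ pκ n c) := by ring
      _ ≤ (vol G S' : ℝ) := hQ'
      _ ≤ (S'.card : ℝ) * (S'.card : ℝ) := hvle
  have hfinal : (n:ℝ)/(2*c) * (93/100) ≤ (S'.card : ℝ) := by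
    have := le_of_mul_le_mul_right
      (by linarith [hchain] : (n:ℝ)/(2*c) * (93/100) * (S'.card : ℝ) ≤ (S'.card : ℝ) * (S'.card : ℝ)) hs0
    exact this
  have e1 : (n:ℝ)/(40*c) = ((n:ℝ)/c)*(1/40) := by
    field_simp
  have e2 : (n:ℝ)/(2*c)*(93/100) = ((n:ℝ)/c)*(93/200) := by field_simp; ring
  have hnc : (0:ℝ) ≤ (n:ℝ)/c := by positivity
  have : (n:ℝ)/(40*c) ≤ (n:ℝ)/(2*c)*(93/100) := by
    rw [e1, e2]
    exact mul_le_mul_of_nonneg_left (by norm_num) hnc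
  linarith
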